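/- (Holmstedt's formula for (l^1, l^2)) There is a universal constant B ≥ 1 such that for every a ∈ l^2 and t > 0, K(t, a; l^1, l^2) ≤ Σ_{k=1}^{[t²]} a_k* + t (Σ_{k=[t²]+1}^∞ (a_k*)²)^{1/2} ≤ B · K(t, a; l^1, l^2), where (a_k*) is the nonincreasing rearrangement of (|a_k|) and [t²] is the integer part of t². -/

import Mathlib

open MeasureTheory
open scoped ENNReal

/-- The nonincreasing rearrangement of the sequence `(|a_k|)` (0-indexed). -/
noncomputable def decRearrSeq (a : ℕ → ℝ) (k : ℕ) : ℝ :=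
  sInf {τ : ℝ | 0 ≤ τ ∧ Measure.count {i : ℕ | τ < |a i|} ≤ (k : ℝ≥0∞)}

/-- The Peetre K-functional for the couple `(ℓ¹, ℓ²)`. -/
noncomputable def Kl (t : ℝ) (a : ℕ → ℝ) : ℝ≥0∞ :=
  ⨅ (b : ℕ → ℝ) (c : ℕ → ℝ) (_ : a = b + c),
    (∑' k, ENNReal.ofReal |b k|) +
      ENNReal.ofReal t * (∑' k, ENNReal.ofReal ((c k) ^ 2)) ^ (1/2 : ℝ)

/-- The Holmstedt expression `∑_{k=1}^{[t²]} a_k* + t (∑_{k=[t²]+1}^∞ (a_k*)²)^{1/2}`. -/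
noncomputable def holmstedt (t : ℝ) (a : ℕ → ℝ) : ℝ≥0∞ :=
  (∑ k ∈ Finset.range ⌊t ^ 2⌋₊, ENNReal.ofReal (decRearrSeq a k)) +
    ENNReal.ofReal t *
      (∑' k : ℕ, ENNReal.ofReal ((decRearrSeq a (⌊t ^ 2⌋₊ + k)) ^ 2)) ^ (1/2 : ℝ)

namespace HolmAux

/-- The standing hypothesis: only finitely many entries above any positive level. -/
def Hc (a : ℕ → ℝ) : Prop := ∀ ε : ℝ, 0 < ε → {i : ℕ | ε ≤ |a i|}.Finite

lemma Hc.mono {a b : ℕ → ℝ} (ha : Hc a) (h : ∀ i, |b i| ≤ |a i|) : Hc b := by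
  intro ε hε
  exact (ha ε hε).subset fun i hi => le_trans hi (h i)

lemma hc_of_summable_abs {b : ℕ → ℝ} (h : Summable fun k => |b k|) : Hc b := by
  intro ε hε
  have hev := h.tendsto_cofinite_zero.eventually (gt_mem_nhds hε)
  refine (Filter.eventually_cofinite.mp hev).subset ?_
  intro i hi
  simp only [Set.mem_setOf_eq] at hi ⊢
  exact not_lt.mpr hi

lemma hc_of_summable_sq {a : ℕ → ℝ} (h : Summable fun k => a k ^ 2) : Hc a := by
  intro ε hε
  have hev := h.tendsto_cofinite_zero.eventually
    (gt_mem_nhds (show (0:ℝ) < ε ^ 2 by positivity))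
  refine (Filter.eventually_cofinite.mp hev).subset ?_
  intro i hi
  simp only [Set.mem_setOf_eq] at hi ⊢
  intro hlt
  have h1 : ε ^ 2 ≤ |a i| ^ 2 := by nlinarith [abs_nonneg (a i)]
  rw [sq_abs] at h1
  exact absurd hlt (not_lt.mpr h1)

lemma exists_max {a : ℕ → ℝ} (ha : Hc a) : ∃ i₀, ∀ i, |a i| ≤ |a i₀| := by
  by_cases h : ∀ i, a i = 0
  · exact ⟨0, fun i => by simp [h]⟩
  · push_neg at h
    obtain ⟨j, hj⟩ := h
    have hj' : 0 < |a j| := abs_pos.mpr hj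
    have hfin := ha _ hj'
    have hne : j ∈ {i : ℕ | |a j| ≤ |a i|} := by simp
    obtain ⟨i₀, hi₀mem, hmax⟩ := Set.exists_max_image _ (fun i => |a i|) hfin ⟨j, hne⟩
    refine ⟨i₀, fun i => ?_⟩
    by_cases hi : |a j| ≤ |a i|
    · exact hmax i hi
    · exact (le_of_not_ge hi).trans (hmax j hne)

lemma S_bddBelow (a : ℕ → ℝ) (k : ℕ) :
    BddBelow {τ : ℝ | 0 ≤ τ ∧ Measure.count {i : ℕ | τ < |a i|} ≤ (k : ℝ≥0∞)} :=
  ⟨0, fun τ hτ => hτ.1⟩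

lemma S_nonempty {a : ℕ → ℝ} (ha : Hc a) (k : ℕ) :
    {τ : ℝ | 0 ≤ τ ∧ Measure.count {i : ℕ | τ < |a i|} ≤ (k : ℝ≥0∞)}.Nonempty := by
  obtain ⟨i₀, hi₀⟩ := exists_max ha
  refine ⟨|a i₀|, abs_nonneg _, ?_⟩
  have hempty : {i : ℕ | |a i₀| < |a i|} = ∅ := by
    ext i; simp only [Set.mem_setOf_eq, Set.mem_empty_iff_false, iff_false, not_lt]
    exact hi₀ i
  simp [hempty]

lemma decRearr_nonneg (a : ℕ → ℝ) (k : ℕ) : 0 ≤ decRearrSeq a k :=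
  Real.sInf_nonneg fun _ hx => hx.1

lemma count_mem {a : ℕ → ℝ} (ha : Hc a) (k : ℕ) :
    Measure.count {i : ℕ | decRearrSeq a k < |a i|} ≤ (k : ℝ≥0∞) := by
  have hS := S_nonempty ha k
  have hbdd := S_bddBelow a k
  have hl : decRearrSeq a k =
      sInf {τ : ℝ | 0 ≤ τ ∧ Measure.count {i : ℕ | τ < |a i|} ≤ (k : ℝ≥0∞)} := rfl
  set l := decRearrSeq a k with hldef
  have key : ∀ F : Finset ℕ, ↑F ⊆ {i : ℕ | l < |a i|} → (F.card : ℝ≥0∞) ≤ (k : ℝ≥0∞) := by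
    intro F hF
    rcases F.eq_empty_or_nonempty with rfl | hFne
    · simp
    · obtain ⟨m, hmF, hm⟩ := F.exists_min_image (fun i => |a i|) hFne
      have hlm : l < |a m| := hF hmF
      rw [hl] at hlm
      obtain ⟨τ, hτS, hτlt⟩ := (csInf_lt_iff hbdd hS).mp hlm
      have hsub : ↑F ⊆ {i : ℕ | τ < |a i|} := fun i hiF =>
        lt_of_lt_of_le hτlt (hm i hiF)
      calc (F.card : ℝ≥0∞) = Measure.count (↑F : Set ℕ) := (Measure.count_apply_finset F).symm
        _ ≤ Measure.count {i : ℕ | τ < |a i|} := measure_mono hsub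
        _ ≤ (k : ℝ≥0∞) := hτS.2
  have hTfin : {i : ℕ | l < |a i|}.Finite := by
    by_contra hinf
    obtain ⟨F, hFsub, hFcard⟩ := Set.Infinite.exists_subset_card_eq hinf (k + 1)
    have hkey := key F hFsub
    rw [hFcard] at hkey
    have : k + 1 ≤ k := by exact_mod_cast hkey
    omega
  rw [Measure.count_apply_finite _ hTfin]
  have := key hTfin.toFinset (by simp)
  simpa using this

lemma decRearr_mem {a : ℕ → ℝ} (ha : Hc a) (k : ℕ) :
    decRearrSeq a k ∈ {τ : ℝ | 0 ≤ τ ∧ Measure.count {i : ℕ | τ < |a i|} ≤ (k : ℝ≥0∞)} :=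
  ⟨decRearr_nonneg a k, count_mem ha k⟩

lemma decRearr_antitone {a : ℕ → ℝ} (ha : Hc a) {j k : ℕ} (h : j ≤ k) :
    decRearrSeq a k ≤ decRearrSeq a j := by
  apply csInf_le_csInf (S_bddBelow a k) (S_nonempty ha j)
  intro τ hτ
  exact ⟨hτ.1, hτ.2.trans (by exact_mod_cast Nat.cast_le.mpr h)⟩

lemma le_decRearr {a : ℕ → ℝ} (ha : Hc a) (F : Finset ℕ) {n : ℕ} (hn : n < F.card)
    {x : ℝ} (hx : ∀ i ∈ F, x ≤ |a i|) : x ≤ decRearrSeq a n := by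
  by_contra hcon
  push_neg at hcon
  have hsub : ↑F ⊆ {i : ℕ | decRearrSeq a n < |a i|} := fun i hiF =>
    lt_of_lt_of_le hcon (hx i hiF)
  have h1 : (F.card : ℝ≥0∞) ≤ (n : ℝ≥0∞) := by
    calc (F.card : ℝ≥0∞) = Measure.count (↑F : Set ℕ) := (Measure.count_apply_finset F).symm
      _ ≤ Measure.count {i : ℕ | decRearrSeq a n < |a i|} := measure_mono hsub
      _ ≤ (n : ℝ≥0∞) := count_mem ha n
  have : F.card ≤ n := by exact_mod_cast h1
  omega

lemma decRearr_zero {a : ℕ → ℝ} (ha : Hc a) {i₀ : ℕ} (hi₀ : ∀ i, |a i| ≤ |a i₀|) :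
    decRearrSeq a 0 = |a i₀| := by
  apply le_antisymm
  · apply csInf_le (S_bddBelow a 0)
    refine ⟨abs_nonneg _, ?_⟩
    have hempty : {i : ℕ | |a i₀| < |a i|} = ∅ := by
      ext i; simp only [Set.mem_setOf_eq, Set.mem_empty_iff_false, iff_false, not_lt]
      exact hi₀ i
    simp [hempty]
  · apply le_csInf (S_nonempty ha 0)
    intro τ hτ
    have h0 : Measure.count {i : ℕ | τ < |a i|} = 0 := le_antisymm (by simpa using hτ.2) zero_le
    have hempty : {i : ℕ | τ < |a i|} = ∅ := Measure.count_eq_zero_iff.mp h0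
    have : i₀ ∉ {i : ℕ | τ < |a i|} := by rw [hempty]; exact Set.notMem_empty _
    simpa [not_lt] using this

lemma decRearr_shift {a : ℕ → ℝ} {i₀ : ℕ} (hi₀ : ∀ i, |a i| ≤ |a i₀|) (j : ℕ) :
    decRearrSeq (Function.update a i₀ 0) j = decRearrSeq a (j + 1) := by
  unfold decRearrSeq
  congr 1
  ext τ
  by_cases hτ0 : 0 ≤ τ
  swap
  · simp [hτ0]
  simp only [Set.mem_setOf_eq, hτ0, true_and]
  by_cases hτ : τ < |a i₀|
  · have hnot : i₀ ∉ {i : ℕ | τ < |Function.update a i₀ 0 i|} := by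
      simp only [Set.mem_setOf_eq, Function.update_self, abs_zero]
      exact not_lt.mpr hτ0
    have hset : {i : ℕ | τ < |a i|} = insert i₀ {i : ℕ | τ < |Function.update a i₀ 0 i|} := by
      ext i
      rcases eq_or_ne i i₀ with rfl | hne
      · simp only [Set.mem_setOf_eq, Set.mem_insert_iff, true_or, iff_true]
        exact hτ
      · simp [Set.mem_insert_iff, hne, Function.update_of_ne hne]
    have hcount : Measure.count {i : ℕ | τ < |a i|}
        = Measure.count {i : ℕ | τ < |Function.update a i₀ 0 i|} + 1 := by
      rw [hset, ← Set.union_singleton,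
        measure_union (Set.disjoint_singleton_right.mpr hnot) (MeasurableSet.singleton _),
        Measure.count_singleton]
    rw [hcount]
    have hcast : ((j + 1 : ℕ) : ℝ≥0∞) = (j : ℝ≥0∞) + 1 := by push_cast; ring
    rw [hcast]
    exact (ENNReal.add_le_add_iff_right (by simp)).symm
  · have h1 : {i : ℕ | τ < |a i|} = ∅ := by
      ext i; simp only [Set.mem_setOf_eq, Set.mem_empty_iff_false, iff_false, not_lt]
      exact (hi₀ i).trans (not_lt.mp hτ)
    have h2 : {i : ℕ | τ < |Function.update a i₀ 0 i|} = ∅ := by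
      ext i; simp only [Set.mem_setOf_eq, Set.mem_empty_iff_false, iff_false, not_lt]
      rcases eq_or_ne i i₀ with rfl | hne
      · simp [hτ0]
      · rw [Function.update_of_ne hne]
        exact (hi₀ i).trans (not_lt.mp hτ)
    simp [h1, h2]

lemma decRearr_subadd {a b c : ℕ → ℝ} (hb : Hc b) (hc : Hc c)
    (hbc : ∀ i, a i = b i + c i) (j k : ℕ) :
    decRearrSeq a (j + k) ≤ decRearrSeq b j + decRearrSeq c k := by
  apply csInf_le (S_bddBelow a (j + k))
  refine ⟨add_nonneg (decRearr_nonneg b j) (decRearr_nonneg c k), ?_⟩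
  have hsub : {i : ℕ | decRearrSeq b j + decRearrSeq c k < |a i|} ⊆
      {i : ℕ | decRearrSeq b j < |b i|} ∪ {i : ℕ | decRearrSeq c k < |c i|} := by
    intro i hi
    simp only [Set.mem_setOf_eq, Set.mem_union] at hi ⊢
    by_contra hcon
    push_neg at hcon
    have habs : |a i| ≤ |b i| + |c i| := by rw [hbc i]; exact abs_add_le _ _
    linarith [hcon.1, hcon.2]
  calc Measure.count {i : ℕ | decRearrSeq b j + decRearrSeq c k < |a i|}
      ≤ Measure.count ({i : ℕ | decRearrSeq b j < |b i|} ∪ {i : ℕ | decRearrSeq c k < |c i|}) :=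
        measure_mono hsub
    _ ≤ Measure.count {i : ℕ | decRearrSeq b j < |b i|}
        + Measure.count {i : ℕ | decRearrSeq c k < |c i|} := measure_union_le _ _
    _ ≤ (j : ℝ≥0∞) + (k : ℝ≥0∞) := add_le_add (count_mem hb j) (count_mem hc k)
    _ = ((j + k : ℕ) : ℝ≥0∞) := by push_cast; ring

lemma hc_update {a : ℕ → ℝ} (ha : Hc a) (i₀ : ℕ) : Hc (Function.update a i₀ 0) := by
  apply ha.mono
  intro i
  rcases eq_or_ne i i₀ with rfl | hne
  · simp
  · rw [Function.update_of_ne hne]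

/-- Direction 1: partial sums of `g` of the rearrangement are dominated by the full sum on `a`. -/
lemma D1 (g : ℝ → ℝ) (hg0 : g 0 = 0) (hg : ∀ x y : ℝ, 0 ≤ x → x ≤ y → g x ≤ g y) :
    ∀ (n : ℕ) (a : ℕ → ℝ), Hc a →
      ∑ k ∈ Finset.range n, ENNReal.ofReal (g (decRearrSeq a k)) ≤
        ∑' i, ENNReal.ofReal (g |a i|) := by
  intro n
  induction n with
  | zero => intro a _; simp
  | succ n ih =>
    intro a ha
    obtain ⟨i₀, hi₀⟩ := exists_max ha
    have ha' : Hc (Function.update a i₀ 0) := hc_update ha i₀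
    rw [Finset.sum_range_succ']
    have h1 : ∀ k, decRearrSeq a (k + 1) = decRearrSeq (Function.update a i₀ 0) k :=
      fun k => (decRearr_shift hi₀ k).symm
    have h2 : ∑ k ∈ Finset.range n, ENNReal.ofReal (g (decRearrSeq a (k + 1))) ≤
        ∑' i, ENNReal.ofReal (g |Function.update a i₀ 0 i|) := by
      simp_rw [h1]; exact ih _ ha'
    have h3 : ENNReal.ofReal (g (decRearrSeq a 0)) = ENNReal.ofReal (g |a i₀|) := by
      rw [decRearr_zero ha hi₀]
    have h4 : ∑' i, ENNReal.ofReal (g |a i|)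
        = ENNReal.ofReal (g |a i₀|) + ∑' i, ENNReal.ofReal (g |Function.update a i₀ 0 i|) := by
      rw [ENNReal.tsum_eq_add_tsum_ite i₀]
      congr 1
      apply tsum_congr
      intro i
      rcases eq_or_ne i i₀ with rfl | h
      · simp [hg0]
      · simp [Function.update_of_ne h, h]
    rw [h4, h3, add_comm (ENNReal.ofReal (g |a i₀|))]
    exact add_le_add h2 le_rfl

lemma tsum_le_of_range {f : ℕ → ℝ≥0∞} {C : ℝ≥0∞}
    (h : ∀ N, ∑ k ∈ Finset.range N, f k ≤ C) : ∑' k, f k ≤ C := by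
  rw [ENNReal.tsum_eq_iSup_sum]
  refine iSup_le fun F => ?_
  have hsub : F ⊆ Finset.range (F.sup id + 1) := fun i hi =>
    Finset.mem_range.mpr (Nat.lt_succ_of_le (Finset.le_sup (f := id) hi))
  exact (Finset.sum_le_sum_of_subset hsub).trans (h _)

lemma D1t (g : ℝ → ℝ) (hg0 : g 0 = 0) (hg : ∀ x y : ℝ, 0 ≤ x → x ≤ y → g x ≤ g y)
    (a : ℕ → ℝ) (ha : Hc a) :
    ∑' k, ENNReal.ofReal (g (decRearrSeq a k)) ≤ ∑' i, ENNReal.ofReal (g |a i|) :=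
  tsum_le_of_range fun N => D1 g hg0 hg N a ha

/-- Direction 2 (finite): any finite sum of squares is dominated by the top rearranged squares. -/
lemma D2fin {a : ℕ → ℝ} (ha : Hc a) :
    ∀ (n : ℕ) (F : Finset ℕ), F.card = n →
      ∑ i ∈ F, ENNReal.ofReal (a i ^ 2) ≤
        ∑ k ∈ Finset.range n, ENNReal.ofReal (decRearrSeq a k ^ 2) := by
  intro n
  induction n with
  | zero => intro F hF; simp [Finset.card_eq_zero.mp hF]
  | succ n ih =>
    intro F hF
    have hFne : F.Nonempty := Finset.card_pos.mp (by omega)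
    obtain ⟨m, hmF, hm⟩ := F.exists_min_image (fun i => |a i|) hFne
    have hcard : (F.erase m).card = n := by rw [Finset.card_erase_of_mem hmF, hF]; omega
    have hub : |a m| ≤ decRearrSeq a n := le_decRearr ha F (by omega) hm
    have hsplit : ∑ i ∈ F, ENNReal.ofReal (a i ^ 2)
        = ∑ i ∈ F.erase m, ENNReal.ofReal (a i ^ 2) + ENNReal.ofReal (a m ^ 2) :=
      (Finset.sum_erase_add F _ hmF).symm
    rw [hsplit, Finset.sum_range_succ]
    refine add_le_add (ih _ hcard) ?_
    apply ENNReal.ofReal_le_ofReal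
    have h1 : a m ^ 2 = |a m| ^ 2 := (sq_abs _).symm
    rw [h1]
    exact pow_le_pow_left₀ (abs_nonneg _) hub 2

lemma D2t {a : ℕ → ℝ} (ha : Hc a) :
    ∑' i, ENNReal.ofReal (a i ^ 2) ≤ ∑' k, ENNReal.ofReal (decRearrSeq a k ^ 2) := by
  rw [ENNReal.tsum_eq_iSup_sum]
  exact iSup_le fun F => (D2fin ha F.card F rfl).trans (ENNReal.sum_le_tsum _)

lemma Kl_le_update (t : ℝ) (a : ℕ → ℝ) (i₀ : ℕ) :
    Kl t a ≤ ENNReal.ofReal |a i₀| + Kl t (Function.update a i₀ 0) := by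
  conv_rhs => rw [Kl]
  rw [ENNReal.add_iInf]
  refine le_iInf fun b => ?_
  rw [ENNReal.add_iInf]
  refine le_iInf fun c => ?_
  rw [ENNReal.add_iInf]
  refine le_iInf fun h => ?_
  set b' := Function.update b i₀ (b i₀ + a i₀) with hb'
  have key1 : a = b' + c := by
    funext i
    have hi := congrFun h i
    rcases eq_or_ne i i₀ with rfl | hne
    · simp only [Function.update_self, Pi.add_apply] at hi ⊢
      simp only [hb', Function.update_self]
      linarith
    · simp only [Function.update_of_ne hne, Pi.add_apply] at hi ⊢
      simp only [hb', Function.update_of_ne hne]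
      exact hi
  have key2 : (∑' k, ENNReal.ofReal |b' k|) ≤ ENNReal.ofReal |a i₀| + ∑' k, ENNReal.ofReal |b k| := by
    have htri : ENNReal.ofReal |b' i₀| ≤ ENNReal.ofReal |a i₀| + ENNReal.ofReal |b i₀| := by
      rw [hb', Function.update_self]
      refine le_trans (ENNReal.ofReal_le_ofReal ?_) ENNReal.ofReal_add_le
      calc |b i₀ + a i₀| ≤ |b i₀| + |a i₀| := abs_add_le _ _
        _ = |a i₀| + |b i₀| := add_comm _ _
    rw [ENNReal.tsum_eq_add_tsum_ite (f := fun k => ENNReal.ofReal |b' k|) i₀,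
        ENNReal.tsum_eq_add_tsum_ite (f := fun k => ENNReal.ofReal |b k|) i₀]
    refine le_trans (add_le_add htri (le_of_eq (tsum_congr fun k => ?_)))
      (le_of_eq (add_assoc _ _ _))
    rcases eq_or_ne k i₀ with rfl | hne
    · simp
    · simp [hne, hb', Function.update_of_ne hne]
  calc Kl t a ≤ (∑' k, ENNReal.ofReal |b' k|)
        + ENNReal.ofReal t * (∑' k, ENNReal.ofReal ((c k) ^ 2)) ^ (1/2 : ℝ) := by
        rw [Kl]
        exact iInf_le_of_le b' (iInf_le_of_le c (iInf_le _ key1))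
    _ ≤ (ENNReal.ofReal |a i₀| + ∑' k, ENNReal.ofReal |b k|)
        + ENNReal.ofReal t * (∑' k, ENNReal.ofReal ((c k) ^ 2)) ^ (1/2 : ℝ) := add_le_add key2 le_rfl
    _ = ENNReal.ofReal |a i₀| + ((∑' k, ENNReal.ofReal |b k|)
        + ENNReal.ofReal t * (∑' k, ENNReal.ofReal ((c k) ^ 2)) ^ (1/2 : ℝ)) := add_assoc _ _ _

lemma Kl_upper (t : ℝ) : ∀ (n : ℕ) (a : ℕ → ℝ), Hc a →
    Kl t a ≤ (∑ k ∈ Finset.range n, ENNReal.ofReal (decRearrSeq a k)) +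
      ENNReal.ofReal t * (∑' j : ℕ, ENNReal.ofReal (decRearrSeq a (n + j) ^ 2)) ^ (1/2 : ℝ) := by
  intro n
  induction n with
  | zero =>
    intro a ha
    have h0 : Kl t a ≤ (∑' k, ENNReal.ofReal |(0 : ℕ → ℝ) k|)
        + ENNReal.ofReal t * (∑' k, ENNReal.ofReal ((a k) ^ 2)) ^ (1/2 : ℝ) := by
      rw [Kl]
      exact iInf_le_of_le 0 (iInf_le_of_le a (iInf_le _ (by funext i; simp)))
    simp only [Pi.zero_apply, abs_zero, ENNReal.ofReal_zero, tsum_zero, zero_add] at h0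
    simp only [Finset.range_zero, Finset.sum_empty, zero_add, Nat.zero_add]
    refine h0.trans ?_
    exact mul_le_mul_right (ENNReal.rpow_le_rpow (D2t ha) (by norm_num)) _
  | succ n ih =>
    intro a ha
    obtain ⟨i₀, hi₀⟩ := exists_max ha
    have ha' : Hc (Function.update a i₀ 0) := hc_update ha i₀
    have ihh := ih (Function.update a i₀ 0) ha'
    have hsh : ∀ k, decRearrSeq (Function.update a i₀ 0) k = decRearrSeq a (k + 1) :=
      decRearr_shift hi₀
    have htail : (∑' j : ℕ, ENNReal.ofReal (decRearrSeq (Function.update a i₀ 0) (n + j) ^ 2))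
        = ∑' j : ℕ, ENNReal.ofReal (decRearrSeq a (n + 1 + j) ^ 2) := by
      apply tsum_congr
      intro j
      have hje : n + j + 1 = n + 1 + j := by omega
      rw [hsh, hje]
    have hhead : (∑ k ∈ Finset.range n, ENNReal.ofReal (decRearrSeq (Function.update a i₀ 0) k))
        = ∑ k ∈ Finset.range n, ENNReal.ofReal (decRearrSeq a (k + 1)) := by
      apply Finset.sum_congr rfl
      intro k _
      rw [hsh]
    rw [htail, hhead] at ihh
    calc Kl t a ≤ ENNReal.ofReal |a i₀| + Kl t (Function.update a i₀ 0) := Kl_le_update t a i₀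
      _ ≤ ENNReal.ofReal |a i₀| + ((∑ k ∈ Finset.range n, ENNReal.ofReal (decRearrSeq a (k + 1)))
          + ENNReal.ofReal t * (∑' j : ℕ, ENNReal.ofReal (decRearrSeq a (n + 1 + j) ^ 2)) ^ (1/2 : ℝ)) :=
        add_le_add le_rfl ihh
      _ = (∑ k ∈ Finset.range (n + 1), ENNReal.ofReal (decRearrSeq a k))
          + ENNReal.ofReal t * (∑' j : ℕ, ENNReal.ofReal (decRearrSeq a (n + 1 + j) ^ 2)) ^ (1/2 : ℝ) := by
        rw [Finset.sum_range_succ']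
        rw [decRearr_zero ha hi₀]
        ring

lemma sum_double (f : ℕ → ℝ≥0∞) : ∀ m : ℕ,
    ∑ k ∈ Finset.range (2 * m), f (k / 2) = ∑ j ∈ Finset.range m, (f j + f j) := by
  intro m
  induction m with
  | zero => simp
  | succ m ih =>
    have h2 : 2 * (m + 1) = (2 * m) + 1 + 1 := by omega
    rw [h2, Finset.sum_range_succ, Finset.sum_range_succ, Finset.sum_range_succ, ih]
    have e1 : (2 * m) / 2 = m := by omega
    have e2 : (2 * m + 1) / 2 = m := by omega
    rw [e1, e2, add_assoc]

lemma sum_half_le (f : ℕ → ℝ≥0∞) (n : ℕ) :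
    ∑ k ∈ Finset.range n, f (k / 2) ≤ 2 * ∑ j ∈ Finset.range n, f j := by
  calc ∑ k ∈ Finset.range n, f (k / 2) ≤ ∑ k ∈ Finset.range (2 * n), f (k / 2) :=
      Finset.sum_le_sum_of_subset (Finset.range_subset_range.mpr (by omega))
    _ = ∑ j ∈ Finset.range n, (f j + f j) := sum_double f n
    _ = 2 * ∑ j ∈ Finset.range n, f j := by
      rw [Finset.sum_add_distrib, two_mul]

lemma tsum_half_le (f : ℕ → ℝ≥0∞) : ∑' k, f (k / 2) ≤ 2 * ∑' k, f k :=
  tsum_le_of_range fun N => (sum_half_le f N).trans (mul_le_mul_right (ENNReal.sum_le_tsum _) 2)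

lemma halfpow_mul_self (x : ℝ≥0∞) : x ^ (1/2 : ℝ) * x ^ (1/2 : ℝ) = x := by
  rw [← ENNReal.rpow_add_of_nonneg _ _ (by norm_num) (by norm_num)]
  norm_num

lemma rpow_half_mul (x : ℝ≥0∞) : (x * x) ^ (1/2 : ℝ) = x := by
  rw [ENNReal.mul_rpow_of_nonneg _ _ (by norm_num), halfpow_mul_self]

lemma four_rpow_half : (4 : ℝ≥0∞) ^ (1/2 : ℝ) = 2 := by
  rw [show (4 : ℝ≥0∞) = 2 * 2 by norm_num, rpow_half_mul]

lemma sq_mono : ∀ x y : ℝ, 0 ≤ x → x ≤ y → x ^ 2 ≤ y ^ 2 := by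
  intro x y hx hxy; nlinarith

/-- Cauchy–Schwarz bound for the head of the rearrangement of `c`. -/
lemma cs_bound (c : ℕ → ℝ) (hc : Hc c) (t : ℝ) (ht : 0 ≤ t) (n : ℕ) (hn : (n : ℝ) ≤ t ^ 2) :
    ∑ j ∈ Finset.range n, ENNReal.ofReal (decRearrSeq c j) ≤
      ENNReal.ofReal t * (∑' k, ENNReal.ofReal (c k ^ 2)) ^ (1/2 : ℝ) := by
  set y : ℕ → ℝ := fun j => decRearrSeq c j with hy
  have hynn : ∀ j, 0 ≤ y j := fun j => decRearr_nonneg c j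
  have hsum_nonneg : 0 ≤ ∑ j ∈ Finset.range n, y j :=
    Finset.sum_nonneg fun j _ => hynn j
  have hsq_nonneg : 0 ≤ ∑ j ∈ Finset.range n, y j ^ 2 :=
    Finset.sum_nonneg fun j _ => sq_nonneg _
  have hcs : (∑ j ∈ Finset.range n, y j) ^ 2 ≤ (n : ℝ) * ∑ j ∈ Finset.range n, y j ^ 2 := by
    have := sq_sum_le_card_mul_sum_sq (s := Finset.range n) (f := y)
    simpa using this
  have h1 : ∑ j ∈ Finset.range n, y j ≤ Real.sqrt ((n : ℝ) * ∑ j ∈ Finset.range n, y j ^ 2) :=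
    (Real.le_sqrt hsum_nonneg (by positivity)).mpr hcs
  have hD1 : ∑ j ∈ Finset.range n, ENNReal.ofReal (y j ^ 2) ≤ ∑' k, ENNReal.ofReal (c k ^ 2) := by
    have := D1 (fun s => s ^ 2) (by norm_num) sq_mono n c hc
    simpa [sq_abs] using this
  calc ∑ j ∈ Finset.range n, ENNReal.ofReal (y j)
      = ENNReal.ofReal (∑ j ∈ Finset.range n, y j) :=
        (ENNReal.ofReal_sum_of_nonneg fun j _ => hynn j).symm
    _ ≤ ENNReal.ofReal (Real.sqrt ((n : ℝ) * ∑ j ∈ Finset.range n, y j ^ 2)) :=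
        ENNReal.ofReal_le_ofReal h1
    _ = ENNReal.ofReal (Real.sqrt n * Real.sqrt (∑ j ∈ Finset.range n, y j ^ 2)) := by
        rw [Real.sqrt_mul (Nat.cast_nonneg n)]
    _ = ENNReal.ofReal (Real.sqrt n) * ENNReal.ofReal (Real.sqrt (∑ j ∈ Finset.range n, y j ^ 2)) :=
        ENNReal.ofReal_mul (Real.sqrt_nonneg _)
    _ ≤ ENNReal.ofReal t * (∑' k, ENNReal.ofReal (c k ^ 2)) ^ (1/2 : ℝ) := by
        refine mul_le_mul' ?_ ?_
        · apply ENNReal.ofReal_le_ofReal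
          calc Real.sqrt n ≤ Real.sqrt (t ^ 2) := Real.sqrt_le_sqrt hn
            _ = t := Real.sqrt_sq ht
        · have e : ENNReal.ofReal (Real.sqrt (∑ j ∈ Finset.range n, y j ^ 2))
              = (ENNReal.ofReal (∑ j ∈ Finset.range n, y j ^ 2)) ^ (1/2 : ℝ) := by
            rw [Real.sqrt_eq_rpow, ENNReal.ofReal_rpow_of_nonneg hsq_nonneg (by norm_num)]
          rw [e]
          refine ENNReal.rpow_le_rpow ?_ (by norm_num)
          calc ENNReal.ofReal (∑ j ∈ Finset.range n, y j ^ 2)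
              = ∑ j ∈ Finset.range n, ENNReal.ofReal (y j ^ 2) :=
                ENNReal.ofReal_sum_of_nonneg fun j _ => sq_nonneg _
            _ ≤ ∑' k, ENNReal.ofReal (c k ^ 2) := hD1

end HolmAux

open HolmAux in
/-- The lower bound, for each individual splitting. -/
lemma holmstedt_le_split (t : ℝ) (ht : 0 < t) (a b c : ℕ → ℝ) (hbc : a = b + c) (ha : Hc a) :
    holmstedt t a ≤ 6 * ((∑' k, ENNReal.ofReal |b k|)
      + ENNReal.ofReal t * (∑' k, ENNReal.ofReal (c k ^ 2)) ^ (1/2 : ℝ)) := by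
  set β := ∑' k, ENNReal.ofReal |b k| with hβdef
  set γ2 := ∑' k, ENNReal.ofReal (c k ^ 2) with hγdef
  by_cases hβ : β = ⊤
  · have : (6 : ℝ≥0∞) * (β + ENNReal.ofReal t * γ2 ^ (1/2 : ℝ)) = ⊤ := by
      rw [hβ, top_add, ENNReal.mul_top (by norm_num)]
    rw [this]; exact le_top
  by_cases hγ : γ2 = ⊤
  · have h1 : ENNReal.ofReal t * γ2 ^ (1/2 : ℝ) = ⊤ := by
      rw [hγ, ENNReal.top_rpow_of_pos (by norm_num), ENNReal.mul_top
        (by simpa [ENNReal.ofReal_eq_zero] using ht.not_ge)]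
    have : (6 : ℝ≥0∞) * (β + ENNReal.ofReal t * γ2 ^ (1/2 : ℝ)) = ⊤ := by
      rw [h1, add_top, ENNReal.mul_top (by norm_num)]
    rw [this]; exact le_top
  have hb : Hc b := by
    apply hc_of_summable_abs
    have := ENNReal.summable_toReal hβ
    simpa [ENNReal.toReal_ofReal (abs_nonneg _)] using this
  have hc : Hc c := by
    apply hc_of_summable_sq
    have := ENNReal.summable_toReal hγ
    simpa [ENNReal.toReal_ofReal (sq_nonneg _)] using this
  have hpt : ∀ i, a i = b i + c i := fun i => congrFun hbc i
  set n := ⌊t ^ 2⌋₊ with hn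
  -- ℓ¹ partial sums of the rearrangement of b
  have hβn : ∀ m : ℕ, ∑ k ∈ Finset.range m, ENNReal.ofReal (decRearrSeq b k) ≤ β := by
    intro m
    have := D1 id rfl (fun _ _ _ h => h) m b hb
    simpa using this
  have hβt : ∑' k, ENNReal.ofReal (decRearrSeq b k) ≤ β := tsum_le_of_range hβn
  have hγn : ∀ m : ℕ, ∑ k ∈ Finset.range m, ENNReal.ofReal (decRearrSeq c k ^ 2) ≤ γ2 := by
    intro m
    have := D1 (fun s => s ^ 2) (by norm_num) sq_mono m c hc
    simpa [sq_abs] using this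
  have hγt : ∑' k, ENNReal.ofReal (decRearrSeq c k ^ 2) ≤ γ2 := tsum_le_of_range hγn
  have hfloor : (n : ℝ) ≤ t ^ 2 := Nat.floor_le (sq_nonneg t)
  -- P1 : head sum
  have hP1 : ∑ k ∈ Finset.range n, ENNReal.ofReal (decRearrSeq a k)
      ≤ 2 * β + 2 * (ENNReal.ofReal t * γ2 ^ (1/2 : ℝ)) := by
    have hterm : ∀ k, ENNReal.ofReal (decRearrSeq a k)
        ≤ ENNReal.ofReal (decRearrSeq b (k / 2)) + ENNReal.ofReal (decRearrSeq c (k / 2)) := by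
      intro k
      have h2 : decRearrSeq a k ≤ decRearrSeq a (k / 2 + k / 2) :=
        decRearr_antitone ha (by omega)
      have h3 : decRearrSeq a k ≤ decRearrSeq b (k / 2) + decRearrSeq c (k / 2) :=
        h2.trans (decRearr_subadd hb hc hpt _ _)
      exact (ENNReal.ofReal_le_ofReal h3).trans ENNReal.ofReal_add_le
    calc ∑ k ∈ Finset.range n, ENNReal.ofReal (decRearrSeq a k)
        ≤ ∑ k ∈ Finset.range n,
            (ENNReal.ofReal (decRearrSeq b (k / 2)) + ENNReal.ofReal (decRearrSeq c (k / 2))) :=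
          Finset.sum_le_sum fun k _ => hterm k
      _ = (∑ k ∈ Finset.range n, ENNReal.ofReal (decRearrSeq b (k / 2)))
          + ∑ k ∈ Finset.range n, ENNReal.ofReal (decRearrSeq c (k / 2)) :=
          Finset.sum_add_distrib
      _ ≤ 2 * (∑ k ∈ Finset.range n, ENNReal.ofReal (decRearrSeq b k))
          + 2 * ∑ k ∈ Finset.range n, ENNReal.ofReal (decRearrSeq c k) :=
          add_le_add (sum_half_le _ n) (sum_half_le _ n)
      _ ≤ 2 * β + 2 * (ENNReal.ofReal t * γ2 ^ (1/2 : ℝ)) :=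
          add_le_add (mul_le_mul_right (hβn n) 2)
            (mul_le_mul_right (cs_bound c hc t ht.le n hfloor) 2)
  -- P2 : tail term
  set x₀ := ENNReal.ofReal (decRearrSeq b (n / 2)) with hx₀def
  have hx₀ : ((n / 2 + 1 : ℕ) : ℝ≥0∞) * x₀ ≤ β := by
    calc ((n / 2 + 1 : ℕ) : ℝ≥0∞) * x₀ = ∑ _k ∈ Finset.range (n / 2 + 1), x₀ := by
          rw [Finset.sum_const, Finset.card_range, nsmul_eq_mul]
      _ ≤ ∑ k ∈ Finset.range (n / 2 + 1), ENNReal.ofReal (decRearrSeq b k) := by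
          refine Finset.sum_le_sum fun k hk => ?_
          exact ENNReal.ofReal_le_ofReal
            (decRearr_antitone hb (Nat.lt_succ_iff.mp (Finset.mem_range.mp hk)))
      _ ≤ β := hβn _
  have hSb : (∑' j : ℕ, ENNReal.ofReal (decRearrSeq b ((n + j) / 2) ^ 2)) ≤ x₀ * (2 * β) := by
    have hterm : ∀ j : ℕ, ENNReal.ofReal (decRearrSeq b ((n + j) / 2) ^ 2)
        ≤ x₀ * ENNReal.ofReal (decRearrSeq b ((n + j) / 2)) := by
      intro j
      have e : ENNReal.ofReal (decRearrSeq b ((n + j) / 2) ^ 2)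
          = ENNReal.ofReal (decRearrSeq b ((n + j) / 2))
            * ENNReal.ofReal (decRearrSeq b ((n + j) / 2)) := by
        rw [sq, ENNReal.ofReal_mul (decRearr_nonneg _ _)]
      rw [e]
      refine mul_le_mul' ?_ le_rfl
      exact ENNReal.ofReal_le_ofReal
        (decRearr_antitone hb (Nat.div_le_div_right (Nat.le_add_right n j)))
    calc (∑' j : ℕ, ENNReal.ofReal (decRearrSeq b ((n + j) / 2) ^ 2))
        ≤ ∑' j : ℕ, x₀ * ENNReal.ofReal (decRearrSeq b ((n + j) / 2)) :=
          ENNReal.tsum_le_tsum hterm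
      _ = x₀ * ∑' j : ℕ, ENNReal.ofReal (decRearrSeq b ((n + j) / 2)) := ENNReal.tsum_mul_left
      _ ≤ x₀ * (2 * β) := by
          refine mul_le_mul_right ?_ x₀
          calc (∑' j : ℕ, ENNReal.ofReal (decRearrSeq b ((n + j) / 2)))
              ≤ ∑' j : ℕ, ENNReal.ofReal (decRearrSeq b (j / 2)) := by
                refine ENNReal.tsum_le_tsum fun j => ?_
                exact ENNReal.ofReal_le_ofReal
                  (decRearr_antitone hb (Nat.div_le_div_right (Nat.le_add_left j n)))
            _ ≤ 2 * ∑' k, ENNReal.ofReal (decRearrSeq b k) :=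
                tsum_half_le fun k => ENNReal.ofReal (decRearrSeq b k)
            _ ≤ 2 * β := mul_le_mul_right hβt 2
  have hSc : (∑' j : ℕ, ENNReal.ofReal (decRearrSeq c ((n + j) / 2) ^ 2)) ≤ 2 * γ2 := by
    calc (∑' j : ℕ, ENNReal.ofReal (decRearrSeq c ((n + j) / 2) ^ 2))
        ≤ ∑' j : ℕ, ENNReal.ofReal (decRearrSeq c (j / 2) ^ 2) := by
          refine ENNReal.tsum_le_tsum fun j => ?_
          refine ENNReal.ofReal_le_ofReal (sq_mono _ _ (decRearr_nonneg _ _) ?_)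
          exact decRearr_antitone hc (Nat.div_le_div_right (Nat.le_add_left j n))
      _ ≤ 2 * ∑' k, ENNReal.ofReal (decRearrSeq c k ^ 2) :=
          tsum_half_le fun k => ENNReal.ofReal (decRearrSeq c k ^ 2)
      _ ≤ 2 * γ2 := mul_le_mul_right hγt 2
  have hT : (∑' j : ℕ, ENNReal.ofReal (decRearrSeq a (n + j) ^ 2))
      ≤ 4 * (x₀ * β) + 4 * γ2 := by
    have hterm2 : ∀ j : ℕ, ENNReal.ofReal (decRearrSeq a (n + j) ^ 2)
        ≤ 2 * ENNReal.ofReal (decRearrSeq b ((n + j) / 2) ^ 2)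
          + 2 * ENNReal.ofReal (decRearrSeq c ((n + j) / 2) ^ 2) := by
      intro j
      have h1 : decRearrSeq a (n + j) ≤ decRearrSeq b ((n + j) / 2) + decRearrSeq c ((n + j) / 2) := by
        have h2 : decRearrSeq a (n + j) ≤ decRearrSeq a ((n + j) / 2 + (n + j) / 2) :=
          decRearr_antitone ha (by omega)
        exact h2.trans (decRearr_subadd hb hc hpt _ _)
      have h3 : decRearrSeq a (n + j) ^ 2
          ≤ 2 * decRearrSeq b ((n + j) / 2) ^ 2 + 2 * decRearrSeq c ((n + j) / 2) ^ 2 := by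
        nlinarith [h1, decRearr_nonneg a (n + j),
          sq_nonneg (decRearrSeq b ((n + j) / 2) - decRearrSeq c ((n + j) / 2)),
          sq_nonneg (decRearrSeq b ((n + j) / 2) + decRearrSeq c ((n + j) / 2))]
      calc ENNReal.ofReal (decRearrSeq a (n + j) ^ 2)
          ≤ ENNReal.ofReal (2 * decRearrSeq b ((n + j) / 2) ^ 2
              + 2 * decRearrSeq c ((n + j) / 2) ^ 2) := ENNReal.ofReal_le_ofReal h3
        _ = 2 * ENNReal.ofReal (decRearrSeq b ((n + j) / 2) ^ 2)
            + 2 * ENNReal.ofReal (decRearrSeq c ((n + j) / 2) ^ 2) := by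
            rw [ENNReal.ofReal_add (by positivity) (by positivity),
              ENNReal.ofReal_mul (by norm_num), ENNReal.ofReal_mul (by norm_num)]
            norm_num
    calc (∑' j : ℕ, ENNReal.ofReal (decRearrSeq a (n + j) ^ 2))
        ≤ ∑' j : ℕ, (2 * ENNReal.ofReal (decRearrSeq b ((n + j) / 2) ^ 2)
            + 2 * ENNReal.ofReal (decRearrSeq c ((n + j) / 2) ^ 2)) :=
          ENNReal.tsum_le_tsum hterm2
      _ = 2 * (∑' j : ℕ, ENNReal.ofReal (decRearrSeq b ((n + j) / 2) ^ 2))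
          + 2 * ∑' j : ℕ, ENNReal.ofReal (decRearrSeq c ((n + j) / 2) ^ 2) := by
          rw [ENNReal.tsum_add, ENNReal.tsum_mul_left, ENNReal.tsum_mul_left]
      _ ≤ 2 * (x₀ * (2 * β)) + 2 * (2 * γ2) :=
          add_le_add (mul_le_mul_right hSb 2) (mul_le_mul_right hSc 2)
      _ = 4 * (x₀ * β) + 4 * γ2 := by ring
  -- the quantity u = t * sqrt x₀
  have hu2 : (ENNReal.ofReal t * x₀ ^ (1/2 : ℝ)) * (ENNReal.ofReal t * x₀ ^ (1/2 : ℝ)) ≤ 2 * β := by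
    have e1 : (ENNReal.ofReal t * x₀ ^ (1/2 : ℝ)) * (ENNReal.ofReal t * x₀ ^ (1/2 : ℝ))
        = (ENNReal.ofReal t * ENNReal.ofReal t) * (x₀ ^ (1/2 : ℝ) * x₀ ^ (1/2 : ℝ)) := by ring
    rw [e1, halfpow_mul_self, ← ENNReal.ofReal_mul ht.le]
    have h2 : ENNReal.ofReal (t * t) ≤ ((n + 1 : ℕ) : ℝ≥0∞) := by
      have h3 : t * t ≤ ((n + 1 : ℕ) : ℝ) := by
        have h4 := Nat.lt_floor_add_one (t ^ 2)
        push_cast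
        nlinarith
      calc ENNReal.ofReal (t * t) ≤ ENNReal.ofReal ((n + 1 : ℕ) : ℝ) :=
          ENNReal.ofReal_le_ofReal h3
        _ = ((n + 1 : ℕ) : ℝ≥0∞) := ENNReal.ofReal_natCast _
    calc ENNReal.ofReal (t * t) * x₀ ≤ ((n + 1 : ℕ) : ℝ≥0∞) * x₀ := mul_le_mul_left h2 x₀
      _ ≤ ((2 * (n / 2 + 1) : ℕ) : ℝ≥0∞) * x₀ := mul_le_mul_left (Nat.cast_le.mpr (by omega)) x₀
      _ = 2 * (((n / 2 + 1 : ℕ) : ℝ≥0∞) * x₀) := by push_cast; ring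
      _ ≤ 2 * β := mul_le_mul_right hx₀ 2
  have hu : ENNReal.ofReal t * x₀ ^ (1/2 : ℝ) ≤ (2 * β) ^ (1/2 : ℝ) := by
    have h5 := ENNReal.rpow_le_rpow hu2 (show (0:ℝ) ≤ 1/2 by norm_num)
    rwa [rpow_half_mul] at h5
  have hP2 : ENNReal.ofReal t * (∑' j : ℕ, ENNReal.ofReal (decRearrSeq a (n + j) ^ 2)) ^ (1/2 : ℝ)
      ≤ 4 * β + 2 * (ENNReal.ofReal t * γ2 ^ (1/2 : ℝ)) := by
    have hsqrtT : (∑' j : ℕ, ENNReal.ofReal (decRearrSeq a (n + j) ^ 2)) ^ (1/2 : ℝ)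
        ≤ 2 * (x₀ ^ (1/2 : ℝ) * β ^ (1/2 : ℝ)) + 2 * γ2 ^ (1/2 : ℝ) := by
      calc (∑' j : ℕ, ENNReal.ofReal (decRearrSeq a (n + j) ^ 2)) ^ (1/2 : ℝ)
          ≤ (4 * (x₀ * β) + 4 * γ2) ^ (1/2 : ℝ) :=
            ENNReal.rpow_le_rpow hT (by norm_num)
        _ ≤ (4 * (x₀ * β)) ^ (1/2 : ℝ) + (4 * γ2) ^ (1/2 : ℝ) :=
            ENNReal.rpow_add_le_add_rpow _ _ (by norm_num) (by norm_num)
        _ = 2 * (x₀ ^ (1/2 : ℝ) * β ^ (1/2 : ℝ)) + 2 * γ2 ^ (1/2 : ℝ) := by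
            rw [ENNReal.mul_rpow_of_nonneg _ _ (show (0:ℝ) ≤ 1/2 by norm_num),
              ENNReal.mul_rpow_of_nonneg _ _ (show (0:ℝ) ≤ 1/2 by norm_num),
              ENNReal.mul_rpow_of_nonneg _ _ (show (0:ℝ) ≤ 1/2 by norm_num),
              four_rpow_half]
    calc ENNReal.ofReal t * (∑' j : ℕ, ENNReal.ofReal (decRearrSeq a (n + j) ^ 2)) ^ (1/2 : ℝ)
        ≤ ENNReal.ofReal t * (2 * (x₀ ^ (1/2 : ℝ) * β ^ (1/2 : ℝ)) + 2 * γ2 ^ (1/2 : ℝ)) :=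
          mul_le_mul_right hsqrtT _
      _ = 2 * ((ENNReal.ofReal t * x₀ ^ (1/2 : ℝ)) * β ^ (1/2 : ℝ))
          + 2 * (ENNReal.ofReal t * γ2 ^ (1/2 : ℝ)) := by ring
      _ ≤ 2 * ((2 * β) ^ (1/2 : ℝ) * β ^ (1/2 : ℝ))
          + 2 * (ENNReal.ofReal t * γ2 ^ (1/2 : ℝ)) :=
          add_le_add (mul_le_mul_right (mul_le_mul_left hu _) 2) le_rfl
      _ ≤ 4 * β + 2 * (ENNReal.ofReal t * γ2 ^ (1/2 : ℝ)) := by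
          refine add_le_add ?_ le_rfl
          have e1 : ((2 : ℝ≥0∞) * β) ^ (1/2 : ℝ) * β ^ (1/2 : ℝ)
              = (2 : ℝ≥0∞) ^ (1/2 : ℝ) * β := by
            rw [ENNReal.mul_rpow_of_nonneg _ _ (show (0:ℝ) ≤ 1/2 by norm_num),
              mul_assoc, halfpow_mul_self]
          have e2 : (2 : ℝ≥0∞) ^ (1/2 : ℝ) ≤ 2 := by
            calc (2 : ℝ≥0∞) ^ (1/2 : ℝ) ≤ (2 : ℝ≥0∞) ^ (1 : ℝ) :=
                ENNReal.rpow_le_rpow_of_exponent_le (by norm_num) (by norm_num)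
              _ = 2 := ENNReal.rpow_one _
          calc 2 * ((2 * β) ^ (1/2 : ℝ) * β ^ (1/2 : ℝ)) = 2 * ((2:ℝ≥0∞) ^ (1/2 : ℝ) * β) := by
                rw [e1]
            _ ≤ 2 * (2 * β) := by
                exact mul_le_mul_right (mul_le_mul_left e2 β) 2
            _ = 4 * β := by ring
  -- combine
  have hh : holmstedt t a = (∑ k ∈ Finset.range n, ENNReal.ofReal (decRearrSeq a k))
      + ENNReal.ofReal t * (∑' j : ℕ, ENNReal.ofReal (decRearrSeq a (n + j) ^ 2)) ^ (1/2 : ℝ) := by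
    rw [holmstedt]
  rw [hh]
  calc (∑ k ∈ Finset.range n, ENNReal.ofReal (decRearrSeq a k))
      + ENNReal.ofReal t * (∑' j : ℕ, ENNReal.ofReal (decRearrSeq a (n + j) ^ 2)) ^ (1/2 : ℝ)
      ≤ (2 * β + 2 * (ENNReal.ofReal t * γ2 ^ (1/2 : ℝ)))
        + (4 * β + 2 * (ENNReal.ofReal t * γ2 ^ (1/2 : ℝ))) := add_le_add hP1 hP2
    _ = 6 * β + 4 * (ENNReal.ofReal t * γ2 ^ (1/2 : ℝ)) := by ring
    _ ≤ 6 * β + 6 * (ENNReal.ofReal t * γ2 ^ (1/2 : ℝ)) := by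
        refine add_le_add le_rfl (mul_le_mul_left (by norm_num) _)
    _ = 6 * (β + ENNReal.ofReal t * γ2 ^ (1/2 : ℝ)) := by ring

open HolmAux in
/-- Holmstedt's formula for the couple `(ℓ¹, ℓ²)`: there is a universal `B ≥ 1` with
`K(t,a;ℓ¹,ℓ²) ≤ ∑_{k≤[t²]} a_k* + t (∑_{k>[t²]} (a_k*)²)^{1/2} ≤ B K(t,a;ℓ¹,ℓ²)`. -/
theorem holmstedt_l1_l2 :
    ∃ B : ℝ, 1 ≤ B ∧ ∀ (a : ℕ → ℝ), Summable (fun k => (a k) ^ 2) →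
      ∀ t : ℝ, 0 < t →
        Kl t a ≤ holmstedt t a ∧ holmstedt t a ≤ ENNReal.ofReal B * Kl t a := by
  refine ⟨6, by norm_num, ?_⟩
  intro a hsum t ht
  have ha : Hc a := hc_of_summable_sq hsum
  constructor
  · have h := Kl_upper t (⌊t ^ 2⌋₊) a ha
    rw [holmstedt]
    exact h
  · have h6 : ENNReal.ofReal (6 : ℝ) = 6 := by
      rw [ENNReal.ofReal_ofNat]
    rw [h6]
    refine ENNReal.le_of_forall_pos_le_add fun ε hε hlt => ?_
    have hKfin : Kl t a ≠ ⊤ := by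
      intro h
      rw [h, ENNReal.mul_top (by norm_num)] at hlt
      exact (lt_irrefl _ hlt).elim
    have hε6 : ((ε : ℝ≥0∞) / 6) ≠ 0 := by
      simp only [ne_eq, ENNReal.div_eq_zero_iff]
      push_neg
      constructor
      · exact_mod_cast hε.ne'
      · norm_num
    have hlt2 : Kl t a < Kl t a + (ε : ℝ≥0∞) / 6 := ENNReal.lt_add_right hKfin hε6
    conv_lhs at hlt2 => rw [Kl]
    obtain ⟨b, hb⟩ := iInf_lt_iff.mp hlt2
    obtain ⟨c, hcc⟩ := iInf_lt_iff.mp hb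
    obtain ⟨hsplit, hval⟩ := iInf_lt_iff.mp hcc
    calc holmstedt t a
        ≤ 6 * ((∑' k, ENNReal.ofReal |b k|)
          + ENNReal.ofReal t * (∑' k, ENNReal.ofReal (c k ^ 2)) ^ (1/2 : ℝ)) :=
          holmstedt_le_split t ht a b c hsplit ha
      _ ≤ 6 * (Kl t a + (ε : ℝ≥0∞) / 6) := mul_le_mul_right hval.le 6
      _ = 6 * Kl t a + 6 * ((ε : ℝ≥0∞) / 6) := by ring
      _ = 6 * Kl t a + (ε : ℝ≥0∞) := by
          congr 1
          rw [mul_comm, ENNReal.div_mul_cancel (by norm_num) (by norm_num)]
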